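/- Suppose 1, f₁, …, fₙ ∈ C^m(U) are analytic (real-analytic) on a connected open domain U ⊂ ℝ^d. Then 1, f₁, …, fₙ are linearly independent over ℝ if and only if every point of U is nondegenerate for f = (f₁,…,fₙ), i.e. for every x ∈ U the partial derivatives of f at x of all orders ≥ 1 span ℝⁿ. -/

import Mathlib

/-- Let `f = (f₁,…,fₙ)` be real-analytic on a connected open domain
`U ⊂ ℝ^d`.  Then `1, f₁, …, fₙ` are linearly independent over `ℝ` (no nontrivial linear
combination `c₀ + Σᵢ cᵢ fᵢ` vanishes identically on `U`) if and only if every point of `U`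
is nondegenerate, i.e. for every `x ∈ U` the partial derivatives `∂_β f(x)` over all
multiindices `β` with `|β| ≥ 1` span `ℝⁿ`. -/
theorem stmt12 {d n : ℕ} (U : Set (EuclideanSpace ℝ (Fin d))) (hU : IsOpen U)
    (hUconn : IsPreconnected U) (hUne : U.Nonempty)
    (f : EuclideanSpace ℝ (Fin d) → (Fin n → ℝ)) (hf : AnalyticOnNhd ℝ f U) :
    (∀ (c₀ : ℝ) (c : Fin n → ℝ),
        (∀ x ∈ U, c₀ + ∑ i, c i * f x i = 0) → c₀ = 0 ∧ c = 0) ↔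
      (∀ x ∈ U, Submodule.span ℝ
        {v : Fin n → ℝ | ∃ m : ℕ, 1 ≤ m ∧ ∃ j : Fin m → Fin d,
          v = iteratedFDerivWithin ℝ m f U x
            (fun s => EuclideanSpace.single (j s) 1)} = ⊤) := by
  classical
  -- the linear functional associated to coefficients c
  set L : (Fin n → ℝ) → ((Fin n → ℝ) →L[ℝ] ℝ) :=
    fun c => ∑ i, c i • ContinuousLinearMap.proj i with hL
  have hLapply : ∀ (c : Fin n → ℝ) (v : Fin n → ℝ), L c v = ∑ i, c i * v i := by
    intro c v
    simp [hL, ContinuousLinearMap.sum_apply]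
  have hcd : ContDiffOn ℝ (⊤ : ℕ∞) f U := hf.contDiffOn hU.uniqueDiffOn
  have key : ∀ (c : Fin n → ℝ) (x : EuclideanSpace ℝ (Fin d)), x ∈ U → ∀ m : ℕ,
      iteratedFDerivWithin ℝ m (fun y => L c (f y)) U x =
        (L c).compContinuousMultilinearMap (iteratedFDerivWithin ℝ m f U x) := by
    intro c x hx m
    exact (L c).iteratedFDerivWithin_comp_left (hcd x hx) hU.uniqueDiffOn hx (by exact_mod_cast le_top)
  constructor
  · -- linear independence → nondegeneracy
    intro hli x hx
    by_contra hne
    obtain ⟨φ, hφne, hφbot⟩ := Submodule.exists_dual_map_eq_bot_of_lt_top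
      (lt_top_iff_ne_top.mpr hne) inferInstance
    have hφzero : ∀ v ∈ {v : Fin n → ℝ | ∃ m : ℕ, 1 ≤ m ∧ ∃ j : Fin m → Fin d,
        v = iteratedFDerivWithin ℝ m f U x
          (fun s => EuclideanSpace.single (j s) 1)}, φ v = 0 := by
      intro v hv
      have : φ v ∈ Submodule.map φ (Submodule.span ℝ _) :=
        Submodule.mem_map_of_mem (Submodule.subset_span hv)
      rw [hφbot] at this
      simpa using this
    set c : Fin n → ℝ := fun i => φ (Pi.single i 1) with hc
    have hφeq : ∀ v, φ v = ∑ i, c i * v i := by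
      intro v
      rw [LinearMap.pi_apply_eq_sum_univ φ v]
      refine Finset.sum_congr rfl fun i _ => ?_
      rw [smul_eq_mul, mul_comm]
      congr 1
      congr 1
      ext j
      simp [Pi.single_apply, eq_comm]
    have hcne : c ≠ 0 := by
      intro h0
      refine hφne (LinearMap.ext fun v => ?_)
      rw [hφeq v, h0]
      simp
    -- g = φ ∘ f
    set g : EuclideanSpace ℝ (Fin d) → ℝ := fun y => L c (f y) with hg
    have hganal : AnalyticOnNhd ℝ g U := fun y hy => ((L c).analyticAt (f y)).comp (hf y hy)
    -- all derivatives of g of order ≥ 1 vanish at x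
    have hder : ∀ m : ℕ, 1 ≤ m → iteratedFDerivWithin ℝ m g U x = 0 := by
      intro m hm
      rw [key c x hx m]
      have hML : ((L c).compContinuousMultilinearMap
          (iteratedFDerivWithin ℝ m f U x)).toMultilinearMap = (0 : MultilinearMap ℝ _ ℝ) := by
        apply Module.Basis.ext_multilinear (fun _ => (EuclideanSpace.basisFun (Fin d) ℝ).toBasis)
        intro j
        have hv : iteratedFDerivWithin ℝ m f U x
            (fun s => EuclideanSpace.single (j s) 1) ∈
            {v : Fin n → ℝ | ∃ m : ℕ, 1 ≤ m ∧ ∃ j : Fin m → Fin d,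
              v = iteratedFDerivWithin ℝ m f U x
                (fun s => EuclideanSpace.single (j s) 1)} := ⟨m, hm, j, rfl⟩
        have := hφzero _ hv
        rw [hφeq] at this
        simpa [EuclideanSpace.basisFun_apply, ← hLapply] using this
      ext v
      exact congrFun (congrArg DFunLike.coe hML) v
    have hderfull : ∀ m : ℕ, 1 ≤ m → iteratedFDeriv ℝ m g x = 0 := by
      intro m hm
      rw [← iteratedFDerivWithin_of_isOpen m hU hx]
      exact hder m hm
    -- g is locally constant near x
    obtain ⟨p, r, hp⟩ := hganal x hx
    have hloc : ∀ᶠ y in nhds x, g y = g x := by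
      have : ∀ y ∈ Metric.eball (0 : EuclideanSpace ℝ (Fin d)) r, g (x + y) = g x := by
        intro y hy
        have hs := hp.hasSum_iteratedFDeriv hy
        have hs0 : HasSum (fun m => ((m.factorial : ℝ))⁻¹ • iteratedFDeriv ℝ m g x fun _ => y)
            (((Nat.factorial 0 : ℝ))⁻¹ • iteratedFDeriv ℝ 0 g x fun _ => y) := by
          apply hasSum_single
          intro m hm
          rw [hderfull m (Nat.one_le_iff_ne_zero.mpr hm)]
          simp
        have := hs.unique hs0
        simpa using this
      have hball : ∀ᶠ y in nhds x, y ∈ {z | g z = g x} := by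
        have hmem : Metric.eball x r ∈ nhds x := Metric.eball_mem_nhds x hp.r_pos
        filter_upwards [hmem] with z hz
        have : g (x + (z - x)) = g x := by
          apply this
          simpa [edist_eq_enorm_sub] using hz
        simpa using this
      exact hball
    have hgconst : Set.EqOn g (fun _ => g x) U :=
      hganal.eqOn_of_preconnected_of_eventuallyEq analyticOnNhd_const hUconn hx hloc
    have := hli (-(g x)) c (fun y hy => by
      have h1 : ∑ i, c i * f y i = g x := by
        rw [← hLapply c (f y)]
        exact hgconst hy
      rw [h1]; ring)
    exact hcne this.2
  · -- nondegeneracy → linear independence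
    intro hspan c₀ c hc
    obtain ⟨x, hx⟩ := hUne
    have hgconst : Set.EqOn (fun y => L c (f y)) (fun _ => -c₀) U := by
      intro y hy
      have h := hc y hy
      show L c (f y) = -c₀
      rw [hLapply]
      linarith
    have hker : ∀ v ∈ {v : Fin n → ℝ | ∃ m : ℕ, 1 ≤ m ∧ ∃ j : Fin m → Fin d,
        v = iteratedFDerivWithin ℝ m f U x
          (fun s => EuclideanSpace.single (j s) 1)}, L c v = 0 := by
      rintro v ⟨m, hm, j, rfl⟩
      have h1 := key c x hx m
      have h2 : iteratedFDerivWithin ℝ m (fun y => L c (f y)) U x = 0 := by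
        rw [iteratedFDerivWithin_congr hgconst hx m]
        exact congrFun (iteratedFDerivWithin_const_of_ne (Nat.one_le_iff_ne_zero.mp hm) _
          _) x
      rw [h1] at h2
      have := congrFun (congrArg DFunLike.coe h2) (fun s => EuclideanSpace.single (j s) 1)
      simpa using this
    have hLzero : ∀ v : Fin n → ℝ, L c v = 0 := by
      intro v
      have hv : v ∈ Submodule.span ℝ {v : Fin n → ℝ | ∃ m : ℕ, 1 ≤ m ∧ ∃ j : Fin m → Fin d,
          v = iteratedFDerivWithin ℝ m f U x
            (fun s => EuclideanSpace.single (j s) 1)} := by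
        rw [hspan x hx]; trivial
      refine Submodule.span_induction (fun w hw => hker w hw) (by simp) ?_ ?_ hv
      · intro a b _ _ ha hb; rw [map_add, ha, hb, add_zero]
      · intro a w _ hw; rw [map_smul, hw, smul_zero]
    have hc0 : c = 0 := by
      ext i
      have := hLzero (Pi.single i 1)
      rw [hLapply] at this
      simpa [Pi.single_apply, mul_ite] using this
    refine ⟨?_, hc0⟩
    have := hc x hx
    rw [hc0] at this
    simpa using this
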